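/- Let E_i(v) denote the set of edges incoming to v which have been incrementally updated, and let G' be the resulting graph. For any s ∈ V and t ∈ V \ {v}, let D(s,t) = d'(s,v) + d(v,t). Then: (1) if d(s,t) < D(s,t), then d'(s,t) = d(s,t) and σ'_{st} = σ_{st}; (2) if d(s,t) = D(s,t) and d(s,v) = d'(s,v), then d'(s,t) = d(s,t) and σ'_{st} = σ_{st} + σ̂'_{sv} · σ_{vt}; (3) if d(s,t) = D(s,t) and d(s,v) > d'(s,v), then d'(s,t) = d(s,t) and σ'_{st} = σ_{st} + σ'_{sv} · σ_{vt}; (4) if d(s,t) > D(s,t), then d'(s,t) = D(s,t) and σ'_{st} = σ'_{sv} · σ_{vt}. -/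

import Mathlib

open scoped ENNReal

namespace BC

variable {V : Type*}

/-- `p` is a path from `s` to `t` in the weighted digraph with weight function `w`;
an edge is present iff its weight is not `⊤`. -/
def IsPath (w : V → V → ℝ≥0∞) (s t : V) (p : List V) : Prop :=
  p ≠ [] ∧ p.head? = some s ∧ p.getLast? = some t ∧ p.Chain' (fun a b => w a b ≠ ⊤)

/-- The weight of a path: the sum of the weights of its consecutive edges. -/
noncomputable def pWeight (w : V → V → ℝ≥0∞) (p : List V) : ℝ≥0∞ :=
  ((p.zip p.tail).map fun e => w e.1 e.2).sum

/-- The shortest-path distance `d(s,t)` (equal to `⊤` if no path exists). -/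
noncomputable def dist (w : V → V → ℝ≥0∞) (s t : V) : ℝ≥0∞ :=
  ⨅ p ∈ {p | IsPath w s t p}, pWeight w p

/-- `p` is a shortest path from `s` to `t`. -/
def IsShortest (w : V → V → ℝ≥0∞) (s t : V) (p : List V) : Prop :=
  IsPath w s t p ∧ pWeight w p = dist w s t

/-- `σ_{st}`: the number of shortest paths from `s` to `t`. -/
noncomputable def nsp (w : V → V → ℝ≥0∞) (s t : V) : ℕ :=
  Set.ncard {p | IsShortest w s t p}

/-- `σ_{st}(x)`: the number of shortest paths from `s` to `t` passing through `x`. -/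
noncomputable def nspVia (w : V → V → ℝ≥0∞) (s t x : V) : ℕ :=
  Set.ncard {p | IsShortest w s t p ∧ x ∈ p}

/-- The directed edge `(a,b)` lies on the path `p`. -/
def edgeOn (p : List V) (a b : V) : Prop := (a, b) ∈ p.zip p.tail

/-- The shortest-path DAG rooted at `s`: the edges lying on shortest paths from `s`. -/
def dagSet (w : V → V → ℝ≥0∞) (s : V) : Set (V × V) :=
  {e | w e.1 e.2 ≠ ⊤ ∧ dist w s e.1 ≠ ⊤ ∧ dist w s e.1 + w e.1 e.2 = dist w s e.2}

/-! ### auxiliary list lemmas -/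

def Z (l : List V) : List (V × V) := l.zip l.tail

@[simp] lemma Z_nil : Z ([] : List V) = [] := rfl
@[simp] lemma Z_single (a : V) : Z [a] = [] := rfl
@[simp] lemma Z_cons_cons (a b : V) (l : List V) : Z (a :: b :: l) = (a, b) :: Z (b :: l) := rfl

lemma Z_append (l₁ : List V) (x : V) (l₂ : List V) :
    Z (l₁ ++ x :: l₂) = Z (l₁ ++ [x]) ++ Z (x :: l₂) := by
  induction l₁ with
  | nil => simp
  | cons a l ih =>
    cases l with
    | nil => simp
    | cons b l' =>
      have : (a :: b :: l') ++ x :: l₂ = a :: ((b :: l') ++ x :: l₂) := rfl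
      rw [this]
      cases l' with
      | nil => simp_all
      | cons c l'' => simp_all

lemma pWeight_eq_Z (w : V → V → ℝ≥0∞) (l : List V) :
    pWeight w l = (Z l |>.map fun e => w e.1 e.2).sum := rfl

lemma pWeight_split (w : V → V → ℝ≥0∞) (l₁ : List V) (x : V) (l₂ : List V) :
    pWeight w (l₁ ++ x :: l₂) = pWeight w (l₁ ++ [x]) + pWeight w (x :: l₂) := by
  rw [pWeight_eq_Z, pWeight_eq_Z, pWeight_eq_Z, Z_append, List.map_append, List.sum_append]

lemma chain'_iff_Z {R : V → V → Prop} {l : List V} :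
    l.Chain' R ↔ ∀ e ∈ Z l, R e.1 e.2 := by
  induction l with
  | nil => simp [List.Chain']
  | cons a l ih =>
    cases l with
    | nil => simp [List.Chain']
    | cons b l' => simp_all [List.Chain', List.isChain_cons_cons]

lemma mem_Z_snd_mem_tail {e : V × V} {l : List V} (h : e ∈ Z l) : e.2 ∈ l.tail := by
  induction l with
  | nil => simp [Z] at h
  | cons a l ih =>
    cases l with
    | nil => simp [Z] at h
    | cons b l' =>
      rcases (by simpa using h : e = (a, b) ∨ e ∈ Z (b :: l')) with rfl | h'
      · simp
      · simpa using List.mem_cons_of_mem b (show e.2 ∈ l' from ih h')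

variable {w w' : V → V → ℝ≥0∞} {s t x v : V} {p q r : List V}

lemma IsPath.chainZ (h : IsPath w s t p) : ∀ e ∈ Z p, w e.1 e.2 ≠ ⊤ :=
  chain'_iff_Z.mp h.2.2.2

lemma list_sum_ne_top {l : List ℝ≥0∞} (h : ∀ a ∈ l, a ≠ ⊤) : l.sum ≠ ⊤ := by
  induction l with
  | nil => simp
  | cons a l ih =>
    simp only [List.sum_cons, ENNReal.add_ne_top]
    exact ⟨h a (by simp), ih fun a' ha' => h a' (by simp [ha'])⟩

lemma pWeight_ne_top (h : ∀ e ∈ Z p, w e.1 e.2 ≠ ⊤) : pWeight w p ≠ ⊤ := by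
  rw [pWeight_eq_Z]
  refine list_sum_ne_top ?_
  intro a ha
  obtain ⟨e, he, rfl⟩ := List.mem_map.mp ha
  exact h e he

lemma IsPath.pWeight_ne_top (h : IsPath w s t p) : pWeight w p ≠ ⊤ :=
  BC.pWeight_ne_top h.chainZ

lemma dist_le (h : IsPath w s t p) : dist w s t ≤ pWeight w p :=
  iInf₂_le p h

lemma IsShortest.dist_ne_top (h : IsShortest w s t p) : dist w s t ≠ ⊤ :=
  h.2 ▸ h.1.pWeight_ne_top

lemma shortest_empty_of_top (h : dist w s t = ⊤) : {p | IsShortest w s t p} = ∅ := by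
  ext p; simp only [Set.mem_setOf_eq, Set.mem_empty_iff_false, iff_false]
  exact fun hp => hp.dist_ne_top h

lemma nsp_eq_zero_of_top (h : dist w s t = ⊤) : nsp w s t = 0 := by
  rw [nsp, shortest_empty_of_top h, Set.ncard_empty]

/-- splitting a path at an interior vertex -/
lemma isPath_split (hp : IsPath w s t (q ++ x :: r)) (hr : r ≠ []) :
    IsPath w s x (q ++ [x]) ∧ IsPath w x t (x :: r) := by
  obtain ⟨-, hh, hl, hc⟩ := hp
  have hcZ := chain'_iff_Z.mp hc
  rw [Z_append] at hcZ
  constructor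
  · refine ⟨by simp, ?_, by simp, chain'_iff_Z.mpr fun e he => hcZ e (by simp [he])⟩
    cases q with
    | nil => simpa using hh
    | cons a q' => simpa using hh
  · refine ⟨by simp, by simp, ?_, chain'_iff_Z.mpr fun e he => hcZ e (by simp [he])⟩
    rw [← hl, List.getLast?_append_of_ne_nil _ (by simp)]

lemma pWeight_split_path (hr : r ≠ []) :
    pWeight w (q ++ x :: r) = pWeight w (q ++ [x]) + pWeight w (x :: r) :=
  pWeight_split w q x r

/-- concatenating paths at a common endpoint -/
lemma isPath_concat (hq : IsPath w s x q) (hr : IsPath w x t r) :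
    IsPath w s t (q ++ r.tail) ∧
    pWeight w (q ++ r.tail) = pWeight w q + pWeight w r ∧
    Z (q ++ r.tail) = Z q ++ Z r := by
  have hrx : x :: r.tail = r := List.cons_head?_tail hr.2.1
  have hqx : q.dropLast ++ [x] = q := by
    have h1 := List.dropLast_append_getLast hq.1
    have : q.getLast hq.1 = x := by
      have := hq.2.2.1
      rwa [List.getLast?_eq_getLast hq.1, Option.some.injEq] at this
    rwa [this] at h1
  cases htail : r.tail with
  | nil =>
    have hrr : r = [x] := by rw [← hrx, htail]
    have htx : t = x := by
      have := hr.2.2.1; rw [hrr] at this; simpa using this.symm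
    subst htx
    refine ⟨by simpa using hq, ?_, by simp [hrr]⟩
    simp [hrr, pWeight]
  | cons b r' =>
    have hne : r.tail ≠ [] := by simp [htail]
    rw [← htail] at *
    have key : q ++ r.tail = q.dropLast ++ x :: r.tail := by
      rw [← hqx]; simp
    have hZ : Z (q ++ r.tail) = Z q ++ Z r := by
      rw [key, Z_append, hqx, hrx]
    refine ⟨⟨by simp [hq.1], ?_, ?_, ?_⟩, ?_, hZ⟩
    · rw [List.head?_append_of_ne_nil _ hq.1]; exact hq.2.1
    · have hgl : (q ++ r.tail).getLast? = r.getLast? := by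
        conv_rhs => rw [← hrx]
        rw [List.getLast?_append_of_ne_nil _ hne,
          show (x :: r.tail : List V) = [x] ++ r.tail from rfl,
          List.getLast?_append_of_ne_nil _ hne]
      rw [hgl]; exact hr.2.2.1
    · rw [chain'_iff_Z]
      intro e he
      rw [hZ] at he
      rcases List.mem_append.mp he with h | h
      · exact hq.chainZ e h
      · exact hr.chainZ e h
    · rw [pWeight_eq_Z, hZ, List.map_append, List.sum_append, ← pWeight_eq_Z, ← pWeight_eq_Z]

/-! ### removing cycles -/

lemma not_nodup_split {l : List V} (h : ¬ l.Nodup) :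
    ∃ (a : List V) (x : V) (b c : List V), l = a ++ x :: (b ++ x :: c) := by
  induction l with
  | nil => simp at h
  | cons y q ih =>
    by_cases hy : y ∈ q
    · obtain ⟨b, c, rfl⟩ := List.append_of_mem hy
      exact ⟨[], y, b, c, rfl⟩
    · have hq : ¬ q.Nodup := by
        intro hn; exact h (List.nodup_cons.mpr ⟨hy, hn⟩)
      obtain ⟨a, x, b, c, rfl⟩ := ih hq
      exact ⟨y :: a, x, b, c, rfl⟩

lemma cycle_pos (hpos : ∀ a b, 0 < w a b) (x : V) (b : List V) :
    0 < pWeight w ((x :: b) ++ [x]) := by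
  cases b with
  | nil => simpa [pWeight] using hpos x x
  | cons y b' =>
    have : pWeight w ((x :: y :: b') ++ [x]) = w x y + pWeight w ((y :: b') ++ [x]) := by
      rw [show (x :: y :: b') ++ [x] = x :: y :: (b' ++ [x]) from rfl]
      rw [pWeight_eq_Z, Z_cons_cons, List.map_cons, List.sum_cons, ← pWeight_eq_Z]
      rfl
    rw [this]
    exact lt_of_lt_of_le (hpos x y) le_self_add

lemma remove_cycle {a : List V} {b c : List V}
    (hp : IsPath w s t (a ++ x :: (b ++ x :: c))) :
    IsPath w s t (a ++ x :: c) ∧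
    pWeight w (a ++ x :: (b ++ x :: c)) =
      pWeight w (a ++ x :: c) + pWeight w ((x :: b) ++ [x]) := by
  obtain ⟨-, hh, hl, hc⟩ := hp
  have hcZ := chain'_iff_Z.mp hc
  have hZ1 : Z (a ++ x :: (b ++ x :: c)) =
      Z (a ++ [x]) ++ (Z ((x :: b) ++ [x]) ++ Z (x :: c)) := by
    have e1 := Z_append a x (b ++ x :: c)
    have e2 := Z_append (x :: b) x c
    rw [e1, show (x :: (b ++ x :: c) : List V) = (x :: b) ++ x :: c from rfl, e2]
  have hZ2 : Z (a ++ x :: c) = Z (a ++ [x]) ++ Z (x :: c) := Z_append a x c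
  constructor
  · refine ⟨by simp, ?_, ?_, ?_⟩
    · rw [← hh]
      cases a with
      | nil => simp
      | cons u a' => simp
    · rw [← hl]
      cases c with
      | nil =>
        have h1 : (a ++ x :: (b ++ x :: [])).getLast? = some x := by
          rw [show a ++ x :: (b ++ x :: []) = (a ++ x :: b) ++ [x] by simp]
          exact List.getLast?_concat
        rw [h1]
        exact List.getLast?_concat
      | cons y c' =>
        rw [List.getLast?_append_of_ne_nil _ (by simp),
          List.getLast?_append_of_ne_nil _ (by simp),
          show (x :: (b ++ x :: y :: c') : List V) = (x :: b ++ [x]) ++ (y :: c') by simp,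
          List.getLast?_append_of_ne_nil _ (by simp),
          show (x :: y :: c' : List V) = [x] ++ (y :: c') from rfl,
          List.getLast?_append_of_ne_nil _ (by simp)]
    · rw [chain'_iff_Z]
      intro e he
      refine hcZ e ?_
      rw [hZ1]
      rw [hZ2] at he
      rcases List.mem_append.mp he with h | h
      · simp [h]
      · simp [h]
  · rw [pWeight_eq_Z, pWeight_eq_Z, pWeight_eq_Z, hZ1, hZ2]
    simp only [List.map_append, List.sum_append]
    ring

lemma shortest_nodup (hpos : ∀ a b, 0 < w a b) (h : IsShortest w s t p) : p.Nodup := by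
  by_contra hnd
  obtain ⟨a, x, b, c, rfl⟩ := not_nodup_split hnd
  obtain ⟨hp', hw⟩ := remove_cycle h.1
  have h1 : dist w s t ≤ pWeight w (a ++ x :: c) := dist_le hp'
  have h2 : pWeight w (a ++ x :: c) < pWeight w (a ++ x :: (b ++ x :: c)) := by
    rw [hw]
    exact ENNReal.lt_add_right hp'.pWeight_ne_top (cycle_pos hpos x b).ne'
  rw [h.2] at h2
  exact absurd (lt_of_le_of_lt h1 h2) (lt_irrefl _)

lemma exists_nodup_path (hp : IsPath w s t p) :
    ∃ q, IsPath w s t q ∧ q.Nodup ∧ pWeight w q ≤ pWeight w p := by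
  obtain ⟨n, hn⟩ : ∃ n, p.length ≤ n := ⟨p.length, le_rfl⟩
  induction n generalizing p with
  | zero => exact absurd (List.length_eq_zero_iff.mp (Nat.le_zero.mp hn)) hp.1
  | succ n ih =>
    by_cases hnd : p.Nodup
    · exact ⟨p, hp, hnd, le_rfl⟩
    · obtain ⟨a, x, b, c, rfl⟩ := not_nodup_split hnd
      obtain ⟨hp', hw⟩ := remove_cycle hp
      have hlen : (a ++ x :: c).length ≤ n := by
        have := hn
        simp only [List.length_append, List.length_cons] at this ⊢
        omega
      obtain ⟨q, hq, hqnd, hqw⟩ := ih hp' hlen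
      exact ⟨q, hq, hqnd, hqw.trans (by rw [hw]; exact le_self_add)⟩

/-! ### attainment -/

lemma nodup_paths_finite [Fintype V] (w : V → V → ℝ≥0∞) (s t : V) :
    {p : List V | IsPath w s t p ∧ p.Nodup}.Finite := by
  refine (List.finite_length_le V (Fintype.card V)).subset ?_
  intro p hp
  exact hp.2.length_le_card

lemma dist_eq_nodup_inf [Fintype V] (w : V → V → ℝ≥0∞) (s t : V) :
    dist w s t = ⨅ p ∈ {p : List V | IsPath w s t p ∧ p.Nodup}, pWeight w p := by
  apply le_antisymm
  · exact le_iInf₂ fun p hp => dist_le hp.1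
  · refine le_iInf₂ fun p hp => ?_
    obtain ⟨q, hq, hqnd, hqw⟩ := exists_nodup_path hp
    exact (iInf₂_le q ⟨hq, hqnd⟩).trans hqw

lemma exists_shortest [Fintype V] (h : dist w s t ≠ ⊤) :
    ∃ p, IsShortest w s t p := by
  have hS : {p : List V | IsPath w s t p ∧ p.Nodup}.Nonempty := by
    by_contra hne
    rw [Set.not_nonempty_iff_eq_empty] at hne
    rw [dist_eq_nodup_inf, hne] at h
    simp at h
  have himg : (pWeight w '' {p : List V | IsPath w s t p ∧ p.Nodup}).Nonempty :=
    hS.image _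
  have hfin : (pWeight w '' {p : List V | IsPath w s t p ∧ p.Nodup}).Finite :=
    (nodup_paths_finite w s t).image _
  have hmem := himg.csInf_mem hfin
  rw [sInf_image, ← dist_eq_nodup_inf] at hmem
  obtain ⟨p, hp, hpw⟩ := hmem
  exact ⟨p, hp.1, hpw⟩

lemma shortest_finite [Fintype V] (hpos : ∀ a b, 0 < w a b) (s t : V) :
    {p : List V | IsShortest w s t p}.Finite := by
  refine (List.finite_length_le V (Fintype.card V)).subset ?_
  intro p hp
  exact (shortest_nodup hpos hp).length_le_card

/-! ### monotonicity and triangle inequality -/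

lemma pWeight_mono (hle : ∀ a b, w' a b ≤ w a b) (p : List V) :
    pWeight w' p ≤ pWeight w p :=
  List.sum_le_sum fun e _ => hle e.1 e.2

lemma IsPath.mono (hle : ∀ a b, w' a b ≤ w a b) (hp : IsPath w s t p) :
    IsPath w' s t p :=
  ⟨hp.1, hp.2.1, hp.2.2.1, chain'_iff_Z.mpr fun e he =>
    fun htop => hp.chainZ e he (top_le_iff.mp (htop ▸ hle e.1 e.2))⟩

lemma dist_mono (hle : ∀ a b, w' a b ≤ w a b) (s t : V) :
    dist w' s t ≤ dist w s t :=
  le_iInf₂ fun p hp => (dist_le (hp.mono hle)).trans (pWeight_mono hle p)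

lemma dist_triangle [Fintype V] (w : V → V → ℝ≥0∞) (s v t : V) :
    dist w s t ≤ dist w s v + dist w v t := by
  by_cases h1 : dist w s v = ⊤
  · simp [h1]
  by_cases h2 : dist w v t = ⊤
  · simp [h2]
  obtain ⟨q, hq⟩ := exists_shortest h1
  obtain ⟨r, hr⟩ := exists_shortest h2
  obtain ⟨hp, hw, -⟩ := isPath_concat hq.1 hr.1
  calc dist w s t ≤ pWeight w (q ++ r.tail) := dist_le hp
    _ = pWeight w q + pWeight w r := hw
    _ = dist w s v + dist w v t := by rw [hq.2, hr.2]

/-! ### last-occurrence decomposition -/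

lemma exists_last_split {l : List V} (h : x ∈ l) :
    ∃ l₁ l₂, l = l₁ ++ x :: l₂ ∧ x ∉ l₂ := by
  induction l using List.reverseRecOn with
  | nil => simp at h
  | append_singleton l y ih =>
    by_cases hy : y = x
    · exact ⟨l, [], by simp [hy], by simp⟩
    · have hx : x ∈ l := by
        rcases List.mem_append.mp h with h' | h'
        · exact h'
        · simp at h'; exact absurd h'.symm hy
      obtain ⟨l₁, l₂, rfl, hn⟩ := ih hx
      refine ⟨l₁, l₂ ++ [y], by simp, ?_⟩
      simp only [List.mem_append, List.mem_singleton]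
      rintro (h' | h')
      · exact hn h'
      · exact hy h'.symm

lemma last_split_unique {l₁ l₂ m₁ m₂ : List V}
    (h : l₁ ++ x :: l₂ = m₁ ++ x :: m₂) (h₂ : x ∉ l₂) (h₄ : x ∉ m₂) :
    l₁ = m₁ ∧ l₂ = m₂ := by
  have hs₁ : (x :: l₂) <:+ m₁ ++ x :: m₂ := h ▸ ⟨l₁, rfl⟩
  have hs₂ : (x :: m₂) <:+ m₁ ++ x :: m₂ := ⟨m₁, rfl⟩
  have hlm : l₂ = m₂ := by
    rcases List.suffix_or_suffix_of_suffix hs₁ hs₂ with hs | hs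
    · rcases List.suffix_cons_iff.mp hs with he | hs'
      · exact (List.cons.injEq .. ▸ he).2
      · exact absurd (hs'.subset (by simp)) h₄
    · rcases List.suffix_cons_iff.mp hs with he | hs'
      · exact ((List.cons.injEq .. ▸ he).2).symm
      · exact absurd (hs'.subset (by simp)) h₂
  subst hlm
  exact ⟨(List.append_inj' h rfl).1, rfl⟩

/-! ### graphs agreeing off updated edges -/

section update

variable {v : V} {U : Finset V}

def usesU (U : Finset V) (v : V) (p : List V) : Prop := ∃ u ∈ U, edgeOn p u v

lemma edgeOn_iff_Z {a b : V} : edgeOn p a b ↔ (a, b) ∈ Z p := Iff.rfl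

lemma w'_le_w (hdec : ∀ u ∈ U, w' u v < w u v)
    (hsame : ∀ a b : V, ¬(b = v ∧ a ∈ U) → w' a b = w a b) :
    ∀ a b, w' a b ≤ w a b := by
  intro a b
  by_cases h : b = v ∧ a ∈ U
  · exact (h.1 ▸ hdec a h.2).le
  · exact (hsame a b h).le

lemma avoid_eq (hsame : ∀ a b : V, ¬(b = v ∧ a ∈ U) → w' a b = w a b)
    (hav : ¬ usesU U v p) :
    ∀ e ∈ Z p, w' e.1 e.2 = w e.1 e.2 := by
  intro e he
  refine hsame e.1 e.2 ?_
  rintro ⟨h1, h2⟩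
  exact hav ⟨e.1, h2, by rwa [edgeOn_iff_Z, ← h1]⟩

lemma avoid_pWeight (hsame : ∀ a b : V, ¬(b = v ∧ a ∈ U) → w' a b = w a b)
    (hav : ¬ usesU U v p) : pWeight w' p = pWeight w p := by
  rw [pWeight_eq_Z, pWeight_eq_Z]
  exact congrArg List.sum (List.map_congr_left fun e he => avoid_eq hsame hav e he)

lemma avoid_isPath_iff (hsame : ∀ a b : V, ¬(b = v ∧ a ∈ U) → w' a b = w a b)
    (hav : ¬ usesU U v p) : IsPath w' s t p ↔ IsPath w s t p := by
  have key : ∀ e ∈ Z p, w' e.1 e.2 = w e.1 e.2 := avoid_eq hsame hav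
  constructor <;> intro hp <;>
    exact ⟨hp.1, hp.2.1, hp.2.2.1, chain'_iff_Z.mpr fun e he => by
      have := hp.chainZ e he
      first
        | rwa [key e he] at this
        | rwa [← key e he] at this⟩

/-- a path avoiding v in its tail does not use updated edges -/
lemma not_usesU_of_not_mem_tail (h : v ∉ p.tail) : ¬ usesU U v p := by
  rintro ⟨u, -, he⟩
  exact h (mem_Z_snd_mem_tail (edgeOn_iff_Z.mp he))

end update

/-! ### ENNReal helpers -/

lemma force_eq {a b c d : ℝ≥0∞} (h : a + b = c + d) (h1 : c ≤ a) (h2 : d ≤ b)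
    (hfin : c + d ≠ ⊤) : a = c ∧ b = d := by
  have hd : d ≠ ⊤ := fun hd => hfin (by simp [hd])
  have hc : c ≠ ⊤ := fun hc => hfin (by simp [hc])
  have e1 : a + d ≤ c + d := by
    calc a + d ≤ a + b := add_le_add_right h2 a
      _ = c + d := h
  have e2 : c + d ≤ a + d := add_le_add_left h1 d
  have : a + d = c + d := le_antisymm e1 e2
  have ha : a = c := by
    rw [add_comm a d, add_comm c d] at this
    exact (ENNReal.add_right_inj hd).mp this
  refine ⟨ha, ?_⟩
  rw [ha] at h
  exact (ENNReal.add_right_inj hc).mp h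

/-! ### structure of paths using updated edges -/

section main

variable {v : V} {U : Finset V}

lemma usesU_split (htv : t ≠ v) (hp : IsPath w' s t p) (hu : usesU U v p)
    (hsame : ∀ a b : V, ¬(b = v ∧ a ∈ U) → w' a b = w a b) :
    ∃ q₀ r₀ : List V, p = q₀ ++ v :: r₀ ∧ v ∉ r₀ ∧ r₀ ≠ [] ∧
      IsPath w' s v (q₀ ++ [v]) ∧ IsPath w v t (v :: r₀) ∧
      pWeight w' p = pWeight w' (q₀ ++ [v]) + pWeight w (v :: r₀) ∧
      usesU U v (q₀ ++ [v]) := by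
  have hvp : v ∈ p := by
    obtain ⟨u, -, he⟩ := hu
    exact List.mem_of_mem_tail (mem_Z_snd_mem_tail (edgeOn_iff_Z.mp he))
  obtain ⟨q₀, r₀, rfl, hvr⟩ := exists_last_split hvp
  have hr0 : r₀ ≠ [] := by
    rintro rfl
    have := hp.2.2.1
    rw [show q₀ ++ v :: ([] : List V) = q₀ ++ [v] from rfl, List.getLast?_concat] at this
    exact htv (by simpa using this.symm)
  obtain ⟨hq, hr'⟩ := isPath_split hp hr0
  have havr : ¬ usesU U v (v :: r₀) := not_usesU_of_not_mem_tail (by simpa using hvr)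
  have hr : IsPath w v t (v :: r₀) := (avoid_isPath_iff hsame havr).mp hr'
  have hwr : pWeight w' (v :: r₀) = pWeight w (v :: r₀) := avoid_pWeight hsame havr
  refine ⟨q₀, r₀, rfl, hvr, hr0, hq, hr, ?_, ?_⟩
  · rw [pWeight_split w' q₀ v r₀, hwr]
  · obtain ⟨u, hU, he⟩ := hu
    rw [edgeOn_iff_Z, Z_append] at he
    rcases List.mem_append.mp he with h | h
    · exact ⟨u, hU, h⟩
    · exact absurd (mem_Z_snd_mem_tail h) (by simpa using hvr)

lemma uses_lower_bound (htv : t ≠ v) (hp : IsPath w' s t p) (hu : usesU U v p)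
    (hsame : ∀ a b : V, ¬(b = v ∧ a ∈ U) → w' a b = w a b) :
    dist w' s v + dist w v t ≤ pWeight w' p := by
  obtain ⟨q₀, r₀, rfl, -, -, hq, hr, hw, -⟩ := usesU_split htv hp hu hsame
  rw [hw]
  exact add_le_add (dist_le hq) (dist_le hr)

lemma dist_min [Fintype V] (htv : t ≠ v)
    (hdec : ∀ u ∈ U, w' u v < w u v)
    (hsame : ∀ a b : V, ¬(b = v ∧ a ∈ U) → w' a b = w a b) :
    dist w' s t = min (dist w s t) (dist w' s v + dist w v t) := by
  have hle := w'_le_w hdec hsame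
  apply le_antisymm
  · refine le_min (dist_mono hle s t) ?_
    calc dist w' s t ≤ dist w' s v + dist w' v t := dist_triangle w' s v t
      _ ≤ dist w' s v + dist w v t := add_le_add_right (dist_mono hle v t) _
  · refine le_iInf₂ fun p hp => ?_
    by_cases hu : usesU U v p
    · exact le_trans (min_le_right _ _) (uses_lower_bound htv hp hu hsame)
    · refine le_trans (min_le_left _ _) ?_
      rw [avoid_pWeight hsame hu]
      exact dist_le ((avoid_isPath_iff hsame hu).mp hp)

lemma pW_lt_of_uses {u : V} (hle : ∀ a b, w' a b ≤ w a b) (hlt : w' u v < w u v)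
    (he : (u, v) ∈ Z p) (hfin : pWeight w p ≠ ⊤) : pWeight w' p < pWeight w p := by
  obtain ⟨l₁, l₂, hZ⟩ := List.append_of_mem he
  rw [pWeight_eq_Z, pWeight_eq_Z, hZ]
  simp only [List.map_append, List.sum_append, List.map_cons, List.sum_cons]
  rw [pWeight_eq_Z, hZ] at hfin
  simp only [List.map_append, List.sum_append, List.map_cons, List.sum_cons] at hfin
  rw [ENNReal.add_ne_top] at hfin
  obtain ⟨h1, h2⟩ := hfin
  rw [ENNReal.add_ne_top] at h2
  obtain ⟨h2a, h2b⟩ := h2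
  have step1 : ((l₁.map fun e => w' e.1 e.2).sum : ℝ≥0∞) ≤ (l₁.map fun e => w e.1 e.2).sum :=
    List.sum_le_sum fun e _ => hle e.1 e.2
  have step2 : ((l₂.map fun e => w' e.1 e.2).sum : ℝ≥0∞) ≤ (l₂.map fun e => w e.1 e.2).sum :=
    List.sum_le_sum fun e _ => hle e.1 e.2
  calc (l₁.map fun e => w' e.1 e.2).sum + (w' u v + (l₂.map fun e => w' e.1 e.2).sum)
      ≤ (l₁.map fun e => w e.1 e.2).sum + (w' u v + (l₂.map fun e => w e.1 e.2).sum) :=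
        add_le_add step1 (add_le_add_right step2 _)
    _ < (l₁.map fun e => w e.1 e.2).sum + (w u v + (l₂.map fun e => w e.1 e.2).sum) := by
        refine ENNReal.add_lt_add_left h1 ?_
        exact ENNReal.add_lt_add_right h2b hlt

lemma A_eq (hdd : dist w' s t = dist w s t)
    (hdec : ∀ u ∈ U, w' u v < w u v)
    (hsame : ∀ a b : V, ¬(b = v ∧ a ∈ U) → w' a b = w a b) :
    {p : List V | IsShortest w' s t p ∧ ¬ usesU U v p} = {p | IsShortest w s t p} := by
  have hle := w'_le_w hdec hsame
  ext p
  simp only [Set.mem_setOf_eq]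
  constructor
  · rintro ⟨⟨hp, hw⟩, hav⟩
    refine ⟨(avoid_isPath_iff hsame hav).mp hp, ?_⟩
    rw [← avoid_pWeight hsame hav, hw, hdd]
  · rintro ⟨hp, hw⟩
    have hav : ¬ usesU U v p := by
      rintro ⟨u, hU, he⟩
      have hfin : pWeight w p ≠ ⊤ := hp.pWeight_ne_top
      have hlt := pW_lt_of_uses hle (hdec u hU) (edgeOn_iff_Z.mp he) hfin
      have : dist w' s t ≤ pWeight w' p := dist_le (hp.mono hle)
      rw [hdd, ← hw] at this
      exact absurd (lt_of_le_of_lt this hlt) (lt_irrefl _)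
    refine ⟨⟨(avoid_isPath_iff hsame hav).mpr hp, ?_⟩, hav⟩
    rw [avoid_pWeight hsame hav, hw, hdd]

end main

lemma IsPath.dropLast_concat (hq : IsPath w s v q) : q.dropLast ++ [v] = q := by
  have h1 := List.dropLast_append_getLast hq.1
  have h2 : q.getLast hq.1 = v := by
    have := hq.2.2.1
    rwa [List.getLast?_eq_getLast hq.1, Option.some.injEq] at this
  rwa [h2] at h1

lemma ncard_prod {α β : Type*} (s : Set α) (t : Set β) :
    (s ×ˢ t).ncard = s.ncard * t.ncard := by
  rw [← Nat.card_coe_set_eq, ← Nat.card_coe_set_eq, ← Nat.card_coe_set_eq,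
    Nat.card_congr (Equiv.Set.prod s t), Nat.card_prod]

section main2

variable {v : V} {U : Finset V}

lemma B_eq [Fintype V] (htv : t ≠ v)
    (hst : dist w' s t = dist w' s v + dist w v t)
    (hfin : dist w' s v + dist w v t ≠ ⊤)
    (hpos : ∀ a b, 0 < w a b)
    (hsame : ∀ a b : V, ¬(b = v ∧ a ∈ U) → w' a b = w a b) :
    {p : List V | IsShortest w' s t p ∧ usesU U v p}.ncard
      = {q : List V | IsShortest w' s v q ∧ usesU U v q}.ncard * nsp w v t := by
  set Shat := {q : List V | IsShortest w' s v q ∧ usesU U v q} with hShat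
  set T := {r : List V | IsShortest w v t r} with hT
  have himg : {p : List V | IsShortest w' s t p ∧ usesU U v p}
      = (fun x : List V × List V => x.1 ++ x.2.tail) '' (Shat ×ˢ T) := by
    ext p
    simp only [Set.mem_setOf_eq, Set.mem_image, Set.mem_prod]
    constructor
    · rintro ⟨⟨hp, hpw⟩, hu⟩
      obtain ⟨q₀, r₀, rfl, hvr, hr0, hq, hr, hw, huq⟩ := usesU_split htv hp hu hsame
      have hsum : pWeight w' (q₀ ++ [v]) + pWeight w (v :: r₀)
          = dist w' s v + dist w v t := by rw [← hw, hpw, hst]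
      obtain ⟨he1, he2⟩ := force_eq hsum (dist_le hq) (dist_le hr) hfin
      refine ⟨(q₀ ++ [v], v :: r₀), ⟨⟨⟨hq, he1⟩, huq⟩, ⟨hr, he2⟩⟩, by simp⟩
    · rintro ⟨⟨q, r⟩, ⟨⟨hq, huq⟩, hr⟩, rfl⟩
      have hrnd : r.Nodup := shortest_nodup hpos hr
      have hrc : v :: r.tail = r := List.cons_head?_tail hr.1.2.1
      have hvr : v ∉ r.tail := by
        rw [← hrc] at hrnd
        exact (List.nodup_cons.mp hrnd).1
      have havr : ¬ usesU U v r := not_usesU_of_not_mem_tail hvr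
      have hr' : IsPath w' v t r := (avoid_isPath_iff hsame havr).mpr hr.1
      obtain ⟨hp, hw, hZ⟩ := isPath_concat hq.1 hr'
      constructor
      · refine ⟨hp, ?_⟩
        rw [hw, avoid_pWeight hsame havr, hq.2, hr.2, hst]
      · obtain ⟨u, hU, he⟩ := huq
        exact ⟨u, hU, by rw [edgeOn_iff_Z, hZ]; exact List.mem_append_left _ he⟩
  have hinj : Set.InjOn (fun x : List V × List V => x.1 ++ x.2.tail) (Shat ×ˢ T) := by
    rintro ⟨q₁, r₁⟩ ⟨hq₁, hr₁⟩ ⟨q₂, r₂⟩ ⟨hq₂, hr₂⟩ heq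
    simp only at heq hq₁ hq₂ hr₁ hr₂
    have hd₁ : q₁.dropLast ++ [v] = q₁ := hq₁.1.1.dropLast_concat
    have hd₂ : q₂.dropLast ++ [v] = q₂ := hq₂.1.1.dropLast_concat
    have hrc₁ : v :: r₁.tail = r₁ := List.cons_head?_tail hr₁.1.2.1
    have hrc₂ : v :: r₂.tail = r₂ := List.cons_head?_tail hr₂.1.2.1
    have hvr₁ : v ∉ r₁.tail := by
      have := shortest_nodup hpos hr₁; rw [← hrc₁] at this
      exact (List.nodup_cons.mp this).1
    have hvr₂ : v ∉ r₂.tail := by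
      have := shortest_nodup hpos hr₂; rw [← hrc₂] at this
      exact (List.nodup_cons.mp this).1
    have heq' : q₁.dropLast ++ v :: r₁.tail = q₂.dropLast ++ v :: r₂.tail := by
      have e₁ : q₁ ++ r₁.tail = q₁.dropLast ++ v :: r₁.tail := by
        rw [← hd₁]; simp
      have e₂ : q₂ ++ r₂.tail = q₂.dropLast ++ v :: r₂.tail := by
        rw [← hd₂]; simp
      rw [← e₁, ← e₂]; exact heq
    obtain ⟨hql, hrl⟩ := last_split_unique heq' hvr₁ hvr₂
    have hq : q₁ = q₂ := by rw [← hd₁, ← hd₂, hql]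
    have hr : r₁ = r₂ := by rw [← hrc₁, ← hrc₂, hrl]
    simp [hq, hr]
  rw [himg, Set.ncard_image_of_injOn hinj, ncard_prod]
  rfl

lemma Shat_full (hlt : dist w' s v < dist w s v)
    (hsame : ∀ a b : V, ¬(b = v ∧ a ∈ U) → w' a b = w a b) :
    {q : List V | IsShortest w' s v q ∧ usesU U v q}
      = {q : List V | IsShortest w' s v q} := by
  ext q
  simp only [Set.mem_setOf_eq, and_iff_left_iff_imp]
  intro hq
  by_contra hav
  have hq' : IsPath w s v q := (avoid_isPath_iff hsame hav).mp hq.1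
  have : dist w s v ≤ pWeight w q := dist_le hq'
  rw [← avoid_pWeight hsame hav, hq.2] at this
  exact absurd (lt_of_le_of_lt this hlt) (lt_irrefl _)

lemma nsp_split [Fintype V] (hpos' : ∀ a b, 0 < w' a b) (s t : V) :
    nsp w' s t = {p : List V | IsShortest w' s t p ∧ ¬ usesU U v p}.ncard
      + {p : List V | IsShortest w' s t p ∧ usesU U v p}.ncard := by
  have hun : {p : List V | IsShortest w' s t p}
      = {p : List V | IsShortest w' s t p ∧ ¬ usesU U v p}
        ∪ {p : List V | IsShortest w' s t p ∧ usesU U v p} := by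
    ext p; by_cases h : usesU U v p <;> simp [h]
  have hfinS := shortest_finite hpos' s t
  rw [nsp, hun,
    Set.ncard_union_eq
      (Set.disjoint_left.mpr (by rintro p ⟨-, h⟩ ⟨-, h'⟩; exact h h'))
      (hfinS.subset fun p hp => hp.1)
      (hfinS.subset fun p hp => hp.1)]

end main2



/-- Lemma 4: after an incremental update on the edges `E_i(v)` incoming
to `v`, for `t ≠ v` and `D(s,t) = d'(s,v) + d(v,t)` (where `σ̂'_{sv}` denotes the number
of shortest `s`–`v` paths of `G'` using an edge of `E_i(v)`):
(1) if `d(s,t) < D(s,t)` then `d'(s,t) = d(s,t)` and `σ'_{st} = σ_{st}`;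
(2) if `d(s,t) = D(s,t)` and `d(s,v) = d'(s,v)` then `d'(s,t) = d(s,t)` and
    `σ'_{st} = σ_{st} + σ̂'_{sv}·σ_{vt}`;
(3) if `d(s,t) = D(s,t)` and `d(s,v) > d'(s,v)` then `d'(s,t) = d(s,t)` and
    `σ'_{st} = σ_{st} + σ'_{sv}·σ_{vt}`;
(4) if `d(s,t) > D(s,t)` then `d'(s,t) = D(s,t)` and `σ'_{st} = σ'_{sv}·σ_{vt}`. -/
theorem vertex_update_dist_sigma [Fintype V]
(w w' : V → V → ℝ≥0∞) (v : V) (U : Finset V)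
    (hpos : ∀ a b, 0 < w a b) (hpos' : ∀ a b, 0 < w' a b)
    (hdec : ∀ u ∈ U, w' u v < w u v)
    (hsame : ∀ a b : V, ¬(b = v ∧ a ∈ U) → w' a b = w a b)
    (s t : V) (htv : t ≠ v) :
    (dist w s t < dist w' s v + dist w v t →
      dist w' s t = dist w s t ∧ nsp w' s t = nsp w s t) ∧
    (dist w s t = dist w' s v + dist w v t → dist w s v = dist w' s v →
      dist w' s t = dist w s t ∧
      nsp w' s t = nsp w s t +
        Set.ncard {p | IsShortest w' s v p ∧ ∃ u ∈ U, edgeOn p u v} * nsp w v t) ∧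
    (dist w s t = dist w' s v + dist w v t → dist w' s v < dist w s v →
      dist w' s t = dist w s t ∧
      nsp w' s t = nsp w s t + nsp w' s v * nsp w v t) ∧
    (dist w' s v + dist w v t < dist w s t →
      dist w' s t = dist w' s v + dist w v t ∧
      nsp w' s t = nsp w' s v * nsp w v t) := by
  have hmin := dist_min (w := w) (w' := w') (s := s) htv hdec hsame
  have hsplit := nsp_split (w' := w') (v := v) (U := U) hpos' s t
  have hShat_eq : {p : List V | IsShortest w' s v p ∧ ∃ u ∈ U, edgeOn p u v}
      = {q : List V | IsShortest w' s v q ∧ usesU U v q} := rfl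
  refine ⟨?_, ?_, ?_, ?_⟩
  · -- case 1
    intro h
    have hdd : dist w' s t = dist w s t := by rw [hmin, min_eq_left h.le]
    refine ⟨hdd, ?_⟩
    have hB : {p : List V | IsShortest w' s t p ∧ usesU U v p} = ∅ := by
      ext p
      simp only [Set.mem_setOf_eq, Set.mem_empty_iff_false, iff_false]
      rintro ⟨hp, hu⟩
      have h1 := uses_lower_bound htv hp.1 hu hsame
      rw [hp.2, hdd] at h1
      exact absurd (lt_of_le_of_lt h1 h) (lt_irrefl _)
    rw [hsplit, hB, Set.ncard_empty, add_zero, A_eq hdd hdec hsame, nsp]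
  · -- case 2
    intro h h2
    have hdd : dist w' s t = dist w s t := by rw [hmin, h, min_self]
    refine ⟨hdd, ?_⟩
    by_cases hD : dist w' s v + dist w v t = ⊤
    · have hd : dist w s t = ⊤ := by rw [h, hD]
      have hd' : dist w' s t = ⊤ := by rw [hdd, hd]
      rw [nsp_eq_zero_of_top hd', nsp_eq_zero_of_top hd, zero_add]
      rcases ENNReal.add_eq_top.mp hD with hsv | hvt
      · have : {p : List V | IsShortest w' s v p ∧ ∃ u ∈ U, edgeOn p u v} = ∅ := by
          ext p
          simp only [Set.mem_setOf_eq, Set.mem_empty_iff_false, iff_false]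
          rintro ⟨hp, -⟩
          exact hp.dist_ne_top hsv
        rw [this, Set.ncard_empty, zero_mul]
      · rw [nsp_eq_zero_of_top hvt, mul_zero]
    · have hst : dist w' s t = dist w' s v + dist w v t := by rw [hdd, h]
      rw [hsplit, A_eq hdd hdec hsame, B_eq htv hst hD hpos hsame, hShat_eq, nsp]; rfl
  · -- case 3
    intro h h2
    have hdd : dist w' s t = dist w s t := by rw [hmin, h, min_self]
    refine ⟨hdd, ?_⟩
    have hfull : {q : List V | IsShortest w' s v q ∧ usesU U v q}
        = {q : List V | IsShortest w' s v q} := Shat_full h2 hsame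
    by_cases hD : dist w' s v + dist w v t = ⊤
    · have hd : dist w s t = ⊤ := by rw [h, hD]
      have hd' : dist w' s t = ⊤ := by rw [hdd, hd]
      rw [nsp_eq_zero_of_top hd', nsp_eq_zero_of_top hd, zero_add]
      have hsv : dist w' s v ≠ ⊤ := ne_top_of_lt h2
      have hvt : dist w v t = ⊤ := by
        rcases ENNReal.add_eq_top.mp hD with h' | h'
        · exact absurd h' hsv
        · exact h'
      rw [nsp_eq_zero_of_top hvt, mul_zero]
    · have hst : dist w' s t = dist w' s v + dist w v t := by rw [hdd, h]
      rw [hsplit, A_eq hdd hdec hsame, B_eq htv hst hD hpos hsame, hfull, nsp, nsp]; rfl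
  · -- case 4
    intro h
    have hD : dist w' s v + dist w v t ≠ ⊤ := ne_top_of_lt h
    have hdd : dist w' s t = dist w' s v + dist w v t := by rw [hmin, min_eq_right h.le]
    refine ⟨hdd, ?_⟩
    have hA : {p : List V | IsShortest w' s t p ∧ ¬ usesU U v p} = ∅ := by
      ext p
      simp only [Set.mem_setOf_eq, Set.mem_empty_iff_false, iff_false]
      rintro ⟨hp, hav⟩
      have hp' : IsPath w s t p := (avoid_isPath_iff hsame hav).mp hp.1
      have h1 : dist w s t ≤ pWeight w p := dist_le hp'
      rw [← avoid_pWeight hsame hav, hp.2, hdd] at h1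
      exact absurd (lt_of_le_of_lt h1 h) (lt_irrefl _)
    have hlt : dist w' s v < dist w s v := by
      have htri := dist_triangle w s v t
      have hvt : dist w v t ≠ ⊤ := fun h' => hD (by simp [h'])
      have : dist w' s v + dist w v t < dist w s v + dist w v t :=
        lt_of_lt_of_le h htri
      exact (ENNReal.add_lt_add_iff_right hvt).mp this
    have hfull : {q : List V | IsShortest w' s v q ∧ usesU U v q}
        = {q : List V | IsShortest w' s v q} := Shat_full hlt hsame
    rw [hsplit, hA, Set.ncard_empty, zero_add, B_eq htv hdd hD hpos hsame, hfull, nsp, nsp]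


end BC
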